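/- If a bounded polyhedron (intersection of finitely many closed half-spaces) in ℝ^m is nonempty, then it has a vertex, i.e., a point that is the unique solution of a subsystem of m of the defining hyperplane equations; consequently, if the half-spaces have rational coefficients of bit-length at most L, the polyhedron contains a rational point each of whose coordinates has bit-length polynomial in m and L. -/

import Mathlib

open Set

/-- A nonempty bounded polyhedron in ℝ^m (a finite intersection of closed half-spaces)
has a vertex: a point of the polyhedron that is the unique solution of a subsystem of
`m` of the defining hyperplane equations. Consequently, if all coefficients are
rational, the polyhedron contains a point with rational coordinates (of polynomial
bit-length, determined by an m × m linear system with those coefficients). -/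
theorem bounded_polyhedron_has_vertex
    (m : ℕ) (ι : Type*) [Fintype ι]
    (A : ι → Fin m → ℝ) (b : ι → ℝ)
    (P : Set (Fin m → ℝ))
    (hP : P = {x | ∀ i : ι, ∑ k, A i k * x k ≤ b i})
    (hbounded : ∃ R : ℝ, ∀ x ∈ P, ∀ k, |x k| ≤ R)
    (hne : P.Nonempty) :
    ∃ x ∈ P, (∃ s : Finset ι, s.card = m ∧
        ∀ y : Fin m → ℝ, (∀ i ∈ s, ∑ k, A i k * y k = b i) → y = x) ∧
      ((∀ i k, ∃ q : ℚ, A i k = (q : ℝ)) → (∀ i, ∃ q : ℚ, b i = (q : ℝ)) →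
        ∀ k, ∃ q : ℚ, x k = (q : ℝ)) := by
  classical
  obtain ⟨R, hR⟩ := hbounded
  set toE : (Fin m → ℝ) → EuclideanSpace ℝ (Fin m) := fun v => WithLp.toLp 2 v with htoE
  have hinner1 : ∀ (v : Fin m → ℝ) (w : EuclideanSpace ℝ (Fin m)),
      (inner ℝ (toE v) w : ℝ) = ∑ k, v k * w k := by
    intro v w
    rw [PiLp.inner_apply]
    simp [RCLike.inner_apply, starRingEnd_apply, star_trivial, htoE, mul_comm]
  have hinner2 : ∀ (v w : Fin m → ℝ),
      (inner ℝ (toE v) (toE w) : ℝ) = ∑ k, v k * w k := by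
    intro v w
    rw [hinner1]
  set T : (Fin m → ℝ) → Set ι := fun x => {i | ∑ k, A i k * x k = b i} with hT
  set W : (Fin m → ℝ) → Submodule ℝ (EuclideanSpace ℝ (Fin m)) :=
    fun x => Submodule.span ℝ ((fun i => toE (A i)) '' T x) with hW
  -- unboundedness lemma
  have hunbd : ∀ x ∈ P, ∀ e : Fin m → ℝ, e ≠ 0 →
      (∀ i, ∑ k, A i k * e k ≤ 0) → False := by
    intro x hx e he0 hle
    obtain ⟨k0, hk0⟩ : ∃ k0, e k0 ≠ 0 := by
      by_contra h; push_neg at h; exact he0 (funext h)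
    have hRnn : 0 ≤ R := le_trans (abs_nonneg _) (hR x hx k0)
    set t : ℝ := (R + |x k0| + 1) / |e k0| with ht
    have htpos : 0 < t := by positivity
    have hxt : (fun k => x k + t * e k) ∈ P := by
      rw [hP]; intro i
      have h1 : ∑ k, A i k * (x k + t * e k)
          = (∑ k, A i k * x k) + t * ∑ k, A i k * e k := by
        rw [Finset.mul_sum, ← Finset.sum_add_distrib]; congr 1; ext k; ring
      rw [h1]
      have hxP : ∑ k, A i k * x k ≤ b i := by rw [hP] at hx; exact hx i
      nlinarith [hle i]
    have hb1 := hR _ hxt k0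
    have h5 : |t * e k0| ≤ |x k0 + t * e k0| + |x k0| := by
      have := abs_add_le (x k0 + t * e k0) (-(x k0))
      simpa using this
    have h6 : |t * e k0| = t * |e k0| := by rw [abs_mul, abs_of_pos htpos]
    have h3 : t * |e k0| = R + |x k0| + 1 := by
      rw [ht]; field_simp
    rw [h6, h3] at h5
    linarith
  -- Step 1: there is a point whose tight rows span everything
  have key : ∃ x ∈ P, W x = ⊤ := by
    set S : Set ℕ := (fun x => Module.finrank ℝ (W x)) '' P with hS
    have hSne : S.Nonempty := hne.image _
    have hSbdd : BddAbove S := by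
      refine ⟨m, ?_⟩
      rintro n ⟨x, hx, rfl⟩
      have := Submodule.finrank_le (W x)
      simpa [finrank_euclideanSpace_fin] using this
    obtain ⟨x, hxP, hxN⟩ := Nat.sSup_mem hSne hSbdd
    have hxN' : Module.finrank ℝ (W x) = sSup S := hxN
    refine ⟨x, hxP, ?_⟩
    by_contra hWne
    have horth : (W x)ᗮ ≠ ⊥ := fun h => hWne (Submodule.orthogonal_eq_bot_iff.mp h)
    obtain ⟨d, hdW, hd0⟩ := (Submodule.ne_bot_iff _).mp horth
    have hdT : ∀ i ∈ T x, ∑ k, A i k * d k = 0 := by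
      intro i hi
      have hAi : toE (A i) ∈ W x := Submodule.subset_span ⟨i, hi, rfl⟩
      have := (Submodule.mem_orthogonal _ _).mp hdW _ hAi
      rwa [hinner1] at this
    by_cases hpos : ∃ i, 0 < ∑ k, A i k * d k
    · set sp : Finset ι := Finset.univ.filter (fun i => 0 < ∑ k, A i k * d k) with hsp
      have hspne : sp.Nonempty := by
        obtain ⟨i, hi⟩ := hpos; exact ⟨i, by simp [hsp, hi]⟩
      obtain ⟨i₀, hi₀mem, hi₀min⟩ := sp.exists_min_image
        (fun i => (b i - ∑ k, A i k * x k) / (∑ k, A i k * d k)) hspne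
      have hxPineq : ∀ i, ∑ k, A i k * x k ≤ b i := by rw [hP] at hxP; exact hxP
      have hslack : ∀ i ∈ sp, 0 < b i - ∑ k, A i k * x k := by
        intro i hi
        have hdpos : 0 < ∑ k, A i k * d k := by simpa [hsp] using hi
        have hnt : ∑ k, A i k * x k ≠ b i := by
          intro h
          have := hdT i h; linarith
        cases lt_or_eq_of_le (hxPineq i) with
        | inl h => linarith
        | inr h => exact absurd h hnt
      have hd0pos : 0 < ∑ k, A i₀ k * d k := by simpa [hsp] using hi₀mem
      set t : ℝ := (b i₀ - ∑ k, A i₀ k * x k) / (∑ k, A i₀ k * d k) with htdef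
      have htpos : 0 < t := div_pos (hslack i₀ hi₀mem) hd0pos
      set x' : Fin m → ℝ := fun k => x k + t * d k with hx'
      have hsum : ∀ (i : ι), ∑ k, A i k * x' k
          = (∑ k, A i k * x k) + t * ∑ k, A i k * d k := by
        intro i
        rw [Finset.mul_sum, ← Finset.sum_add_distrib]; congr 1; ext k
        simp only [hx']; ring
      have hx'P : x' ∈ P := by
        rw [hP]; intro i
        rw [hsum]
        rcases le_or_gt (∑ k, A i k * d k) 0 with h | h
        · nlinarith [hxPineq i]
        · have hmem : i ∈ sp := by simp [hsp, h]
          have hmin := hi₀min i hmem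
          have h2 : t * (∑ k, A i k * d k) ≤ b i - ∑ k, A i k * x k :=
            (le_div_iff₀ h).mp hmin
          linarith
      have hTsub : ∀ i ∈ T x, i ∈ T x' := by
        intro i hi
        have hz := hdT i hi
        simp only [hT, Set.mem_setOf_eq] at hi ⊢
        rw [hsum, hz]; simpa using hi
      have hi₀T : i₀ ∈ T x' := by
        simp only [hT, Set.mem_setOf_eq]
        rw [hsum, htdef, div_mul_cancel₀ _ (ne_of_gt hd0pos)]; ring
      have hAi₀ : toE (A i₀) ∉ W x := by
        intro hmem
        have := (Submodule.mem_orthogonal _ _).mp hdW _ hmem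
        rw [hinner1] at this; linarith
      have hlt : W x < W x' := by
        refine lt_of_le_of_ne (Submodule.span_mono (Set.image_mono hTsub)) ?_
        intro h
        exact hAi₀ (h ▸ Submodule.subset_span ⟨i₀, hi₀T, rfl⟩)
      have h1 : Module.finrank ℝ (W x) < Module.finrank ℝ (W x') :=
        Submodule.finrank_lt_finrank_of_lt hlt
      have h2 : Module.finrank ℝ (W x') ≤ sSup S :=
        le_csSup hSbdd ⟨x', hx'P, rfl⟩
      omega
    · push_neg at hpos
      exact hunbd x hxP (WithLp.ofLp d) (fun h => hd0 (by simpa using congrArg (WithLp.toLp 2) h)) hpos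
  -- Step 2: extract m linearly independent tight rows
  obtain ⟨x, hxP, hWtop⟩ := key
  obtain ⟨B, hBV, hBspan, hBli⟩ :=
    exists_linearIndependent ℝ ((fun i => toE (A i)) '' T x)
  have hBtop : Submodule.span ℝ B = ⊤ := hBspan.trans hWtop
  have hBfin : B.Finite := hBli.setFinite
  haveI := hBfin.fintype
  let bas : Module.Basis B ℝ (EuclideanSpace ℝ (Fin m)) :=
    Module.Basis.mk hBli (by rw [Subtype.range_coe, hBtop])
  have hcard : Fintype.card B = m := by
    have := Module.finrank_eq_card_basis bas
    rw [finrank_euclideanSpace_fin] at this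
    omega
  have hchoose : ∀ v : B, ∃ i, i ∈ T x ∧ toE (A i) = (v : EuclideanSpace ℝ (Fin m)) := by
    rintro ⟨v, hv⟩
    obtain ⟨i, hi, hiv⟩ := hBV hv
    exact ⟨i, hi, hiv⟩
  choose f hfT hfA using hchoose
  have hfinj : Function.Injective f := by
    intro v w hvw
    have : (v : EuclideanSpace ℝ (Fin m)) = w := by rw [← hfA v, ← hfA w, hvw]
    exact Subtype.ext this
  set s : Finset ι := Finset.univ.image f with hs
  have hscard : s.card = m := by
    rw [hs, Finset.card_image_of_injective _ hfinj, Finset.card_univ, hcard]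
  have htightT : ∀ i ∈ T x, ∑ k, A i k * x k = b i := fun i hi => hi
  have huniq : ∀ y : Fin m → ℝ, (∀ i ∈ s, ∑ k, A i k * y k = b i) → y = x := by
    intro y hy
    set z : EuclideanSpace ℝ (Fin m) := toE y - toE x with hz
    have hzB : ∀ v ∈ B, (inner ℝ v z : ℝ) = 0 := by
      intro v hv
      have hvmem : f ⟨v, hv⟩ ∈ s := by simp [hs]
      have h1 : ∑ k, A (f ⟨v, hv⟩) k * y k = b (f ⟨v, hv⟩) := hy _ hvmem
      have h2 : ∑ k, A (f ⟨v, hv⟩) k * x k = b (f ⟨v, hv⟩) :=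
        htightT _ (hfT ⟨v, hv⟩)
      have hAv : toE (A (f ⟨v, hv⟩)) = v := hfA ⟨v, hv⟩
      rw [hz, inner_sub_right, ← hAv, hinner2, hinner2, h1, h2]; ring
    have hzorth : z ∈ (Submodule.span ℝ B)ᗮ := by
      rw [Submodule.mem_orthogonal]
      intro u hu
      induction hu using Submodule.span_induction with
      | mem u hu => exact hzB u hu
      | zero => simp
      | add u v _ _ hu hv => rw [inner_add_left, hu, hv]; ring
      | smul a u _ hu => rw [inner_smul_left, hu]; simp
    rw [hBtop, Submodule.top_orthogonal_eq_bot, Submodule.mem_bot] at hzorth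
    have h7 : toE y = toE x := by
      rw [hz] at hzorth; exact sub_eq_zero.mp hzorth
    simpa [htoE] using h7
  refine ⟨x, hxP, ⟨s, hscard, huniq⟩, ?_⟩
  -- rationality
  intro hA hb k
  choose qA hqA using hA
  choose qb hqb using hb
  set e : {i // i ∈ s} ≃ Fin m := Finset.equivFinOfCardEq hscard with he
  set M : Matrix (Fin m) (Fin m) ℝ := fun j l => A (e.symm j) l with hM
  set Mq : Matrix (Fin m) (Fin m) ℚ := fun j l => qA (e.symm j) l with hMq
  set bq : Fin m → ℚ := fun j => qb (e.symm j) with hbq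
  set bv : Fin m → ℝ := fun j => b (e.symm j) with hbv
  have hMmap : Mq.map (Rat.cast) = M := by
    ext j l; rw [Matrix.map_apply]; exact (hqA _ _).symm
  have hbvmap : ∀ j, bv j = (bq j : ℝ) := fun j => hqb _
  have htight : ∀ i ∈ s, ∑ l, A i l * x l = b i := by
    intro i hi
    obtain ⟨v, _, rfl⟩ := Finset.mem_image.mp (by rwa [hs] at hi)
    exact htightT _ (hfT v)
  have hMx : M.mulVec x = bv := by
    funext j
    simp only [Matrix.mulVec, dotProduct, hM, hbv]
    exact htight _ (e.symm j).2
  have hdet : M.det ≠ 0 := by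
    intro hdet0
    obtain ⟨v, hv0, hMv⟩ := Matrix.exists_mulVec_eq_zero_iff.mpr hdet0
    have hxv : (x + v) = x := by
      apply huniq
      intro i hi
      have hj : (M.mulVec (x + v)) (e ⟨i, hi⟩) = bv (e ⟨i, hi⟩) := by
        rw [Matrix.mulVec_add, hMv, hMx]; simp
      simpa [Matrix.mulVec, dotProduct, hM, hbv] using hj
    exact hv0 (by simpa using congrArg (fun w => w - x) hxv)
  have hdetq : Mq.det ≠ 0 := by
    intro h
    apply hdet
    have := RingHom.map_det (Rat.castHom ℝ) Mq
    rw [h] at this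
    simp only [map_zero] at this
    rw [← hMmap]
    rw [show Mq.map (Rat.cast : ℚ → ℝ) = Mq.map (Rat.castHom ℝ) from rfl]
    exact this.symm
  set N : Matrix (Fin m) (Fin m) ℚ := Mq⁻¹ with hN
  have hNMq : N * Mq = 1 := Matrix.nonsing_inv_mul _ (Ne.isUnit hdetq)
  have hNM : (N.map Rat.cast) * M = 1 := by
    rw [← hMmap]
    have hmm : (N.map (Rat.castHom ℝ)) * (Mq.map (Rat.castHom ℝ)) = (N * Mq).map (Rat.castHom ℝ) :=
      (Matrix.map_mul).symm
    rw [show ((Rat.castHom ℝ : ℚ →+* ℝ) : ℚ → ℝ) = (Rat.cast : ℚ → ℝ) from rfl] at hmm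
    rw [hmm, hNMq, Matrix.map_one _ (by simp) (by simp)]
  have hxeq : x = (N.map Rat.cast).mulVec bv := by
    rw [← hMx, Matrix.mulVec_mulVec, hNM, Matrix.one_mulVec]
  refine ⟨∑ j, N k j * bq j, ?_⟩
  have hck := congrFun hxeq k
  rw [hck]
  simp only [Matrix.mulVec, dotProduct, Matrix.map_apply]
  push_cast
  congr 1
  funext j
  rw [hbvmap j]
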